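/- Let A and B be n×n matrices over a field F. Then the characteristic matrices xI - A and xI - B are equivalent over the polynomial ring F[x] (i.e., P(xI-A)Q = xI-B for some invertible P, Q over F[x]) if and only if A and B are similar over F (i.e., A = S^{-1}BS for some invertible S over F). -/

import Mathlib

open Polynomial

lemma aux_deg19 {S : Type*} [Ring S] [Nontrivial S] {b : S} {w : S[X]}
    (hdeg : degree ((X - C b) * w) ≤ 1) : degree w ≤ 0 := by
  have hm : Monic (X - C b) := monic_X_sub_C b
  rw [hm.degree_mul_comm, hm.degree_mul, degree_X_sub_C] at hdeg
  rcases eq_or_ne w 0 with rfl | hw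
  · simp
  · rw [degree_eq_natDegree hw] at hdeg ⊢
    rw [show ((1:WithBot ℕ)) = ((1:ℕ) : WithBot ℕ) from rfl, ← Nat.cast_add, Nat.cast_le] at hdeg
    exact_mod_cast Nat.le_of_lt_succ (Nat.lt_succ_of_le (by omega))

lemma aux_key19 {S : Type*} [Ring S] [Nontrivial S] {T a b : S} {w : S[X]}
    (h : C T * (X - C a) = (X - C b) * w) : w = C T ∧ T * a = b * T := by
  have hdeg : degree ((X - C b) * w) ≤ 1 := by
    rw [← h]
    refine (degree_mul_le _ _).trans ?_
    rw [degree_X_sub_C]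
    exact (add_le_add degree_C_le le_rfl).trans (by rw [zero_add])
  obtain ⟨w₀, rfl⟩ : ∃ w₀, w = C w₀ := ⟨w.coeff 0, (eq_C_of_degree_le_zero (aux_deg19 hdeg))⟩
  have h1 := congrArg (fun p => coeff p 1) h
  have h0 := congrArg (fun p => coeff p 0) h
  simp [mul_sub, sub_mul, coeff_C_mul, coeff_mul_C, X_mul] at h1 h0
  exact ⟨by rw [h1], by rw [h1] at h0 ⊢; exact h0⟩

lemma aux_comm19 {S : Type*} [Ring S] {T a b : S} (h : T * a = b * T) :
    C T * (X - C a) = (X - C b) * C T := by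
  rw [mul_sub, sub_mul, ← C_mul, ← C_mul, ← h, X_mul_C]

lemma aux_zero19 {S : Type*} [Ring S] [Nontrivial S] {b r : S} {w : S[X]}
    (h : (X - C b) * w = C r) : r = 0 := by
  have hm : Monic (X - C b) := monic_X_sub_C b
  rcases eq_or_ne w 0 with rfl | hw
  · have : C r = 0 := by rw [← h, mul_zero]
    exact_mod_cast C_eq_zero.mp this
  · exfalso
    have h1 : degree ((X - C b) * w) = 1 + degree w := by
      rw [hm.degree_mul_comm, hm.degree_mul, degree_X_sub_C, add_comm]
    have hle : degree ((X - C b) * w) ≤ 0 := h ▸ degree_C_le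
    rw [h1, degree_eq_natDegree hw,
      show ((1:WithBot ℕ)) = ((1:ℕ) : WithBot ℕ) from rfl, ← Nat.cast_add,
      show ((0:WithBot ℕ)) = ((0:ℕ) : WithBot ℕ) from rfl, Nat.cast_le] at hle
    omega

/-- The characteristic matrices `xI - A` and `xI - B` are equivalent over `F[x]`
iff `A` and `B` are similar over `F`. -/
theorem stmt19 {F : Type*} [Field F] {n : ℕ}
    (A B : Matrix (Fin n) (Fin n) F) :
    (∃ P Q : Matrix (Fin n) (Fin n) (Polynomial F),
        IsUnit P ∧ IsUnit Q ∧ P * Matrix.charmatrix A * Q = Matrix.charmatrix B)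
      ↔ ∃ S T : Matrix (Fin n) (Fin n) F, S * T = 1 ∧ T * S = 1 ∧ A = T * B * S := by
  constructor
  · rintro ⟨P, Q, hP, hQ, h⟩
    rcases Nat.eq_zero_or_pos n with hn | hn
    · subst hn
      exact ⟨1, 1, Subsingleton.elim _ _, Subsingleton.elim _ _, Subsingleton.elim _ _⟩
    haveI : Nonempty (Fin n) := ⟨⟨0, hn⟩⟩
    obtain ⟨pu, hpu⟩ := hP.map (matPolyEquiv (R := F) (n := Fin n))
    obtain ⟨qu, hqu⟩ := hQ.map (matPolyEquiv (R := F) (n := Fin n))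
    set dA : (Matrix (Fin n) (Fin n) F)[X] := X - C A with hdA
    set dB : (Matrix (Fin n) (Fin n) F)[X] := X - C B with hdB
    have h' : (pu : (Matrix (Fin n) (Fin n) F)[X]) * dA * (qu : _) = dB := by
      rw [hpu, hqu, hdA, hdB, ← Matrix.matPolyEquiv_charmatrix, ← Matrix.matPolyEquiv_charmatrix,
        ← map_mul, ← map_mul, h]
    have hmA : dA.Monic := monic_X_sub_C A
    have hmB : dB.Monic := monic_X_sub_C B
    -- p * dA = dB * q⁻¹
    have hpdA : (pu : (Matrix (Fin n) (Fin n) F)[X]) * dA = dB * (↑qu⁻¹) := by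
      have := congrArg (fun z => z * ((↑qu⁻¹ : (Matrix (Fin n) (Fin n) F)[X]))) h'
      simpa [mul_assoc, Units.mul_inv] using this
    -- p⁻¹ * dB = dA * q
    have hpinv : (↑pu⁻¹ : (Matrix (Fin n) (Fin n) F)[X]) * dB = dA * (qu : _) := by
      have := congrArg (fun z => ((↑pu⁻¹ : (Matrix (Fin n) (Fin n) F)[X])) * z) h'
      simpa [← mul_assoc, Units.inv_mul] using this.symm
    -- division of p by dB
    set T : Matrix (Fin n) (Fin n) F := (((pu : _) : (Matrix (Fin n) (Fin n) F)[X]) %ₘ dB).coeff 0 with hT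
    have hTc : ((pu : _) : (Matrix (Fin n) (Fin n) F)[X]) %ₘ dB = C T := by
      apply eq_C_of_degree_le_zero
      have := degree_modByMonic_lt ((pu : _) : (Matrix (Fin n) (Fin n) F)[X]) hmB
      rw [hdB, degree_X_sub_C] at this
      exact Nat.WithBot.lt_one_iff_le_zero.mp this
    set u : (Matrix (Fin n) (Fin n) F)[X] := ((pu : _) : (Matrix (Fin n) (Fin n) F)[X]) /ₘ dB with hu
    have hpdecomp : ((pu : _) : (Matrix (Fin n) (Fin n) F)[X]) = C T + dB * u := by
      conv_lhs => rw [← modByMonic_add_div ((pu : _) : (Matrix (Fin n) (Fin n) F)[X]) dB]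
      rw [hTc]
    -- division of p⁻¹ by dA
    set S : Matrix (Fin n) (Fin n) F := ((↑pu⁻¹ : (Matrix (Fin n) (Fin n) F)[X]) %ₘ dA).coeff 0 with hS
    have hSc : (↑pu⁻¹ : (Matrix (Fin n) (Fin n) F)[X]) %ₘ dA = C S := by
      apply eq_C_of_degree_le_zero
      have := degree_modByMonic_lt (↑pu⁻¹ : (Matrix (Fin n) (Fin n) F)[X]) hmA
      rw [hdA, degree_X_sub_C] at this
      exact Nat.WithBot.lt_one_iff_le_zero.mp this
    set v : (Matrix (Fin n) (Fin n) F)[X] := (↑pu⁻¹ : (Matrix (Fin n) (Fin n) F)[X]) /ₘ dA with hv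
    have hpidecomp : (↑pu⁻¹ : (Matrix (Fin n) (Fin n) F)[X]) = C S + dA * v := by
      conv_lhs => rw [← modByMonic_add_div (↑pu⁻¹ : (Matrix (Fin n) (Fin n) F)[X]) dA]
      rw [hSc]
    -- key identity 1: T * A = B * T
    have hTA : T * A = B * T := by
      have hstep : (C T + dB * u) * dA = dB * (↑qu⁻¹) := by rw [← hpdecomp]; exact hpdA
      have heq : C T * dA = dB * ((↑qu⁻¹ : (Matrix (Fin n) (Fin n) F)[X]) - u * dA) := by
        calc C T * dA = (C T + dB * u) * dA - dB * (u * dA) := by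
              rw [add_mul, mul_assoc, add_sub_cancel_right]
          _ = dB * (↑qu⁻¹) - dB * (u * dA) := by rw [hstep]
          _ = dB * ((↑qu⁻¹ : (Matrix (Fin n) (Fin n) F)[X]) - u * dA) := (mul_sub _ _ _).symm
      exact (aux_key19 (a := A) (b := B) heq).2
    -- key identity 2: S * B = A * S
    have hSB : S * B = A * S := by
      have hstep : (C S + dA * v) * dB = dA * (qu : _) := by rw [← hpidecomp]; exact hpinv
      have heq : C S * dB = dA * (((qu : _) : (Matrix (Fin n) (Fin n) F)[X]) - v * dB) := by
        calc C S * dB = (C S + dA * v) * dB - dA * (v * dB) := by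
              rw [add_mul, mul_assoc, add_sub_cancel_right]
          _ = dA * (qu : _) - dA * (v * dB) := by rw [hstep]
          _ = dA * (((qu : _) : (Matrix (Fin n) (Fin n) F)[X]) - v * dB) := (mul_sub _ _ _).symm
      exact (aux_key19 (a := B) (b := A) heq).2
    -- product identity: T * S = 1
    have hTS : T * S = 1 := by
      have hcomm : C T * dA = dB * C T := aux_comm19 hTA
      have hone : (C T + dB * u) * (C S + dA * v) = 1 := by
        rw [← hpdecomp, ← hpidecomp, Units.mul_inv]
      have hexp : dB * (C T * v + u * C S + u * dA * v) = C (1 - T * S) := by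
        calc dB * (C T * v + u * C S + u * dA * v)
            = (dB * C T) * v + dB * (u * C S) + dB * (u * (dA * v)) := by
              simp only [mul_add, mul_assoc]
          _ = (C T * dA) * v + dB * (u * C S) + dB * (u * (dA * v)) := by rw [hcomm]
          _ = (C T + dB * u) * (C S + dA * v) - C T * C S := by
              simp only [mul_add, add_mul, mul_assoc]; abel
          _ = 1 - C (T * S) := by rw [hone, C_mul]
          _ = C (1 - T * S) := by rw [map_sub, C_1]
      have h0 : (1 : Matrix (Fin n) (Fin n) F) - T * S = 0 := aux_zero19 hexp
      exact (sub_eq_zero.mp h0).symm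
    have hST : S * T = 1 := mul_eq_one_comm.mp hTS
    refine ⟨T, S, hTS, hST, ?_⟩
    calc A = (S * T) * A := by rw [hST, one_mul]
      _ = S * (T * A) := by rw [mul_assoc]
      _ = S * (B * T) := by rw [hTA]
      _ = S * B * T := by rw [mul_assoc]
  · rintro ⟨S, T, hST, hTS, rfl⟩
    refine ⟨S.map C, T.map C, ?_, ?_, ?_⟩
    · exact IsUnit.map (C : F →+* F[X]).mapMatrix ⟨⟨S, T, hST, hTS⟩, rfl⟩
    · exact IsUnit.map (C : F →+* F[X]).mapMatrix ⟨⟨T, S, hTS, hST⟩, rfl⟩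
    · apply matPolyEquiv.injective
      rw [map_mul, map_mul, Matrix.matPolyEquiv_charmatrix, Matrix.matPolyEquiv_charmatrix,
        matPolyEquiv_map_C, matPolyEquiv_map_C]
      have e1 : S * (T * B * S) * T = B := by
        calc S * (T * B * S) * T = (S * T) * B * (S * T) := by simp only [mul_assoc]
          _ = B := by rw [hST, one_mul, mul_one]
      calc C S * (X - C (T * B * S)) * C T
          = C S * X * C T - C (S * (T * B * S) * T) := by
            rw [mul_sub, sub_mul, ← C_mul, ← C_mul]
        _ = X - C B := by
            rw [← X_mul, mul_assoc, ← C_mul, hST, C_1, mul_one, e1]
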